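/- If R is a commutative local nil-clean ring, then for every positive integer n the matrix ring Mₙ(R) is nil-clean. -/

import Mathlib

/-- An element of a ring is nil-clean if it is the sum of an idempotent and a nilpotent. -/
def IsNilCleanRing (R : Type*) [Ring R] : Prop :=
  ∀ a : R, ∃ e n : R, IsIdempotentElem e ∧ IsNilpotent n ∧ a = e + n

open Matrix

open Matrix

/-- element-level nil-clean -/
def NCe {S : Type*} [Ring S] (a : S) : Prop :=
  ∃ e n : S, IsIdempotentElem e ∧ IsNilpotent n ∧ a = e + n

lemma NCe.map {S T : Type*} [Ring S] [Ring T] (φ : S ≃+* T) {a : S} (h : NCe a) : NCe (φ a) := by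
  obtain ⟨e, n, he, hn, rfl⟩ := h
  exact ⟨φ e, φ n, by unfold IsIdempotentElem; rw [← _root_.map_mul, he.eq],
    hn.map (φ : S →+* T), by rw [map_add]⟩

section Blocks

variable {α β S : Type*} [Fintype α] [Fintype β] [DecidableEq α] [DecidableEq β] [Ring S]

lemma blockTri_nilpotent {A : Matrix α α S} {D : Matrix β β S} (X : Matrix α β S)
    (hA : IsNilpotent A) (hD : IsNilpotent D) :
    IsNilpotent (Matrix.fromBlocks A X 0 D) := by
  obtain ⟨a, ha⟩ := hA
  obtain ⟨b, hb⟩ := hD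
  have key : ∀ k : ℕ, ∃ Y, (Matrix.fromBlocks A X 0 D) ^ k = Matrix.fromBlocks (A ^ k) Y 0 (D ^ k) := by
    intro k
    induction k with
    | zero => exact ⟨0, by simp [Matrix.fromBlocks_one]⟩
    | succ k ih =>
      obtain ⟨Y, hY⟩ := ih
      refine ⟨A ^ k * X + Y * D, ?_⟩
      rw [pow_succ, pow_succ, pow_succ, hY, Matrix.fromBlocks_multiply]
      simp
  refine ⟨a + b, ?_⟩
  obtain ⟨Y, hY⟩ := key (a + b)
  obtain ⟨Ya, hYa⟩ := key a
  obtain ⟨Yb, hYb⟩ := key b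
  have : (Matrix.fromBlocks A X 0 D) ^ (a + b) =
      (Matrix.fromBlocks A X 0 D) ^ a * (Matrix.fromBlocks A X 0 D) ^ b := by rw [← pow_add]
  rw [this, hYa, hYb, Matrix.fromBlocks_multiply, ha, hb]
  simp [Matrix.fromBlocks_zero]

lemma NCe.fromBlocks {A : Matrix α α S} {D : Matrix β β S} (X : Matrix α β S)
    (hA : NCe A) (hD : NCe D) : NCe (Matrix.fromBlocks A X 0 D) := by
  obtain ⟨e₁, n₁, he₁, hn₁, rfl⟩ := hA
  obtain ⟨e₂, n₂, he₂, hn₂, rfl⟩ := hD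
  refine ⟨Matrix.fromBlocks e₁ 0 0 e₂, Matrix.fromBlocks n₁ X 0 n₂, ?_, ?_, ?_⟩
  · unfold IsIdempotentElem
    rw [Matrix.fromBlocks_multiply]
    simp [he₁.eq, he₂.eq]
  · exact blockTri_nilpotent X hn₁ hn₂
  · rw [Matrix.fromBlocks_add]
    simp

end Blocks

abbrev K2 := ZMod 2

lemma K2.add_self (a : K2) : a + a = 0 := by
  rw [← two_mul, show (2 : K2) = 0 from rfl, zero_mul]

lemma sum_ite_val {m : ℕ} {S : Type*} [Ring S] (f : Fin m → S) (p : ℕ) :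
    (∑ l : Fin m, if (l : ℕ) = p then f l else 0) = if h : p < m then f ⟨p, h⟩ else 0 := by
  split_ifs with h
  · rw [Finset.sum_eq_single ⟨p, h⟩]
    · simp
    · intro b _ hb
      rw [if_neg fun hv => hb (Fin.ext hv)]
    · simp
  · apply Finset.sum_eq_zero; intro l _; rw [if_neg]; omega

/-- the companion matrix (last column = c, subdiagonal 1). -/
def cpn (n : ℕ) (c : Fin (n+1) → K2) : Matrix (Fin (n+1)) (Fin (n+1)) K2 :=
  Matrix.of fun i j => if (j : ℕ) = n then c i else if (i : ℕ) = (j : ℕ) + 1 then 1 else 0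

/-- the shift matrix -/
def shf (m : ℕ) : Matrix (Fin m) (Fin m) K2 :=
  Matrix.of fun i j => if (i : ℕ) = (j : ℕ) + 1 then 1 else 0

lemma shf_pow (m k : ℕ) (i j : Fin m) :
    ((shf m) ^ k) i j = if (i : ℕ) = (j : ℕ) + k then 1 else 0 := by
  induction k generalizing i j with
  | zero => simp [Matrix.one_apply, Fin.ext_iff]
  | succ k ih =>
    rw [pow_succ', Matrix.mul_apply]
    have : ∀ l : Fin m, shf m i l * ((shf m) ^ k) l j
        = if (l : ℕ) = (j : ℕ) + k then (if (i:ℕ) = (l:ℕ) + 1 then (1:K2) else 0) else 0 := by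
      intro l
      rw [ih]
      by_cases h : (l : ℕ) = (j : ℕ) + k <;> simp [h, shf]
    rw [Finset.sum_congr rfl fun l _ => this l, sum_ite_val]
    by_cases hjk : (j : ℕ) + k < m
    · rw [dif_pos hjk]
      rw [show ((⟨(j:ℕ)+k, hjk⟩ : Fin m) : ℕ) = (j:ℕ)+k from rfl,
        show (j:ℕ)+k+1 = (j:ℕ)+(k+1) from by omega]
    · rw [dif_neg hjk, if_neg (by omega)]

lemma shf_nilpotent (m : ℕ) : IsNilpotent (shf m) := by
  refine ⟨m, ?_⟩
  ext i j
  rw [shf_pow, if_neg (by omega)]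
  rfl

def lastcol (n : ℕ) (c : Fin (n+1) → K2) : Matrix (Fin (n+1)) (Fin (n+1)) K2 :=
  Matrix.of fun i j => if (j : ℕ) = n then c i else 0

lemma lastcol_idem (n : ℕ) (c : Fin (n+1) → K2) (hc : c ⟨n, Nat.lt_succ_self n⟩ = 1) :
    IsIdempotentElem (lastcol n c) := by
  unfold IsIdempotentElem
  ext i j
  rw [Matrix.mul_apply]
  have : ∀ l : Fin (n+1), lastcol n c i l * lastcol n c l j
      = if (l : ℕ) = n then (c i * lastcol n c l j) else 0 := by
    intro l
    by_cases h : (l : ℕ) = n <;> simp [lastcol, h]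
  rw [Finset.sum_congr rfl fun l _ => this l, sum_ite_val, dif_pos (Nat.lt_succ_self n)]
  by_cases h : (j : ℕ) = n <;> simp [lastcol, h, hc]

lemma nc_cpn_trace_one (n : ℕ) (c : Fin (n+1) → K2) (hc : c ⟨n, Nat.lt_succ_self n⟩ = 1) :
    NCe (cpn n c) := by
  refine ⟨lastcol n c, shf (n+1), lastcol_idem n c hc, shf_nilpotent _, ?_⟩
  ext i j
  by_cases h : (j : ℕ) = n
  · simp only [cpn, lastcol, shf, Matrix.of_apply, Matrix.add_apply, if_pos h]
    rw [if_neg (by omega : ¬ (i:ℕ) = (j:ℕ) + 1), add_zero]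
  · simp [cpn, lastcol, shf, h]
section TraceZero

variable (k : ℕ) (a : K2)

/-- column k+1 of B -/
def sv : Fin (k+3) → K2 := fun p =>
  if (p : ℕ) = k+2 then 1 else if (p : ℕ) = k then 1 + a else 1

/-- column k+2 of B -/
def tv : Fin (k+3) → K2 := fun p =>
  (if (p : ℕ) = 0 then 1 else 0) + (if (p : ℕ) = k+1 then a else 0) +
  (if (p : ℕ) = k then a else 0) + (if (p : ℕ) = k+2 then 1 else 0)

def wv : Fin (k+3) → K2 := fun p => if (p : ℕ) = k+2 then 0 else sv k a p

def BB : Matrix (Fin (k+3)) (Fin (k+3)) K2 := Matrix.of fun i j =>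
  if (j : ℕ) = k+1 then sv k a i else if (j : ℕ) = k+2 then tv k a i
  else if (i : ℕ) = (j : ℕ) + 1 then 1 else 0

variable (c : Fin (k+3) → K2)

def uv : Fin (k+3) → K2 := fun p => c p + tv k a p

def EE : Matrix (Fin (k+3)) (Fin (k+3)) K2 := Matrix.of fun i j =>
  wv k a i * (if (j : ℕ) = k+1 then 1 else 0) + uv k a c i * (if (j : ℕ) = k+2 then 1 else 0)

lemma sv_k1 : sv k a ⟨k+1, by omega⟩ = 1 := by
  simp only [sv, Fin.val_mk]
  rw [if_neg (show ¬ k+1 = k+2 by omega), if_neg (show ¬ k+1 = k by omega)]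

lemma sv_k2 : sv k a ⟨k+2, by omega⟩ = 1 := by
  simp [sv]

lemma tv_k1 : tv k a ⟨k+1, by omega⟩ = a := by
  simp [tv, show ¬ k+1 = 0 by omega, show ¬ k+1 = k by omega, show ¬ k+1 = k+2 by omega]

lemma tv_k2 : tv k a ⟨k+2, by omega⟩ = 1 := by
  simp [tv, show ¬ k+2 = 0 by omega, show ¬ k+2 = k+1 by omega, show ¬ k+2 = k by omega]

lemma wv_k1 : wv k a ⟨k+1, by omega⟩ = 1 := by
  simp only [wv, Fin.val_mk]
  rw [if_neg (show ¬ k+1 = k+2 by omega)]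
  exact sv_k1 k a

lemma wv_k2 : wv k a ⟨k+2, by omega⟩ = 0 := by
  simp [wv]

variable {k a c} in
lemma uv_k1 (ha : c ⟨k+1, by omega⟩ = a) : uv k a c ⟨k+1, by omega⟩ = 0 := by
  simp only [uv]; rw [ha, tv_k1, K2.add_self]

variable {k a c} in
lemma uv_k2 (hc : c ⟨k+2, by omega⟩ = 0) : uv k a c ⟨k+2, by omega⟩ = 1 := by
  simp only [uv]; rw [hc, tv_k2, zero_add]

/-- the key computation: B *ᵥ s = 0 -/
lemma key_Bs : BB k a *ᵥ sv k a = 0 := by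
  funext i
  show (∑ j : Fin (k+3), BB k a i j * sv k a j) = 0
  have split : ∀ j : Fin (k+3), BB k a i j * sv k a j =
      ((if (j : ℕ) = k+1 then sv k a i else 0) + (if (j : ℕ) = k+2 then tv k a i else 0)) +
      (if ((j : ℕ) < k+1 ∧ (i : ℕ) = (j : ℕ) + 1) then sv k a j else 0) := by
    intro j
    by_cases h1 : (j : ℕ) = k+1
    · have hs : sv k a j = 1 := by
        simp only [sv]
        rw [if_neg (show ¬ (j:ℕ) = k+2 by omega), if_neg (show ¬ (j:ℕ) = k by omega)]
      have hB : BB k a i j = sv k a i := by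
        simp only [BB, Matrix.of_apply]; rw [if_pos h1]
      rw [hB, hs, mul_one, if_pos h1, if_neg (by omega),
        if_neg (by omega : ¬ ((j:ℕ) < k+1 ∧ (i:ℕ) = (j:ℕ)+1)), add_zero, add_zero]
    · by_cases h2 : (j : ℕ) = k+2
      · have hs : sv k a j = 1 := by simp only [sv]; rw [if_pos h2]
        have hB : BB k a i j = tv k a i := by
          simp only [BB, Matrix.of_apply]; rw [if_neg h1, if_pos h2]
        rw [hB, hs, mul_one, if_neg h1, if_pos h2, zero_add,
          if_neg (by omega : ¬ ((j:ℕ) < k+1 ∧ (i:ℕ) = (j:ℕ)+1)), add_zero]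
      · have hB : BB k a i j = if (i:ℕ) = (j:ℕ)+1 then 1 else 0 := by
          simp only [BB, Matrix.of_apply]; rw [if_neg h1, if_neg h2]
        rw [hB, if_neg h1, if_neg h2, zero_add, zero_add]
        by_cases h3 : (i : ℕ) = (j : ℕ) + 1
        · rw [if_pos h3, one_mul, if_pos (by omega)]
        · rw [if_neg h3, zero_mul, if_neg (by omega)]
  rw [Finset.sum_congr rfl fun j _ => split j, Finset.sum_add_distrib, Finset.sum_add_distrib,
    sum_ite_val (fun _ => sv k a i) (k+1), sum_ite_val (fun _ => tv k a i) (k+2),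
    dif_pos (by omega : k+1 < k+3), dif_pos (by omega : k+2 < k+3)]
  by_cases hi : 1 ≤ (i : ℕ) ∧ (i : ℕ) ≤ k+1
  · have third : ∀ j : Fin (k+3), (if ((j : ℕ) < k+1 ∧ (i : ℕ) = (j : ℕ) + 1) then sv k a j else 0)
        = if (j : ℕ) = (i : ℕ) - 1 then sv k a j else 0 := by
      intro j
      by_cases hj : (j : ℕ) = (i : ℕ) - 1
      · rw [if_pos (by omega), if_pos hj]
      · rw [if_neg (by omega), if_neg hj]
    rw [Finset.sum_congr rfl fun j _ => third j, sum_ite_val, dif_pos (by omega : (i:ℕ)-1 < k+3)]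
    -- now a pure scalar computation
    simp only [sv, tv, Fin.val_mk]
    split_ifs <;> first
      | (exfalso; omega)
      | (clear split; (try clear third); revert a; decide)
  · rw [Finset.sum_eq_zero (fun j _ => by rw [if_neg (by omega)]), add_zero]
    simp only [sv, tv, Fin.val_mk]
    split_ifs <;> first
      | (exfalso; omega)
      | (clear split; (try clear third); revert a; decide)

end TraceZero

section TraceZero2

variable (k : ℕ) (a : K2) (c : Fin (k+3) → K2)

lemma EE_apply (i l : Fin (k+3)) : EE k a c i l =
    if (l : ℕ) = k+1 then wv k a i else if (l : ℕ) = k+2 then uv k a c i else 0 := by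
  simp only [EE, Matrix.of_apply]
  by_cases h1 : (l : ℕ) = k+1
  · rw [if_pos h1, if_neg (show ¬ (l:ℕ) = k+2 by omega), if_pos h1, mul_one, mul_zero, add_zero]
  · rw [if_neg h1, mul_zero, zero_add, if_neg h1]
    by_cases h2 : (l : ℕ) = k+2
    · rw [if_pos h2, if_pos h2, mul_one]
    · rw [if_neg h2, if_neg h2, mul_zero]

variable {k a c} in
lemma EE_idem (ha : c ⟨k+1, by omega⟩ = a) (hc : c ⟨k+2, by omega⟩ = 0) :
    IsIdempotentElem (EE k a c) := by
  unfold IsIdempotentElem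
  ext i j
  rw [Matrix.mul_apply]
  have expand : ∀ l : Fin (k+3), EE k a c i l * EE k a c l j =
      (if (l : ℕ) = k+1 then wv k a i * EE k a c l j else 0) +
      (if (l : ℕ) = k+2 then uv k a c i * EE k a c l j else 0) := by
    intro l
    rw [EE_apply k a c i l]
    by_cases h1 : (l : ℕ) = k+1
    · rw [if_pos h1, if_neg (show ¬ (l:ℕ) = k+2 by omega), if_pos h1, add_zero]
    · rw [if_neg h1, if_neg h1, zero_add]
      by_cases h2 : (l : ℕ) = k+2
      · rw [if_pos h2, if_pos h2]
      · rw [if_neg h2, if_neg h2, zero_mul]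
  rw [Finset.sum_congr rfl fun l _ => expand l, Finset.sum_add_distrib,
    sum_ite_val (fun l => wv k a i * EE k a c l j) (k+1),
    sum_ite_val (fun l => uv k a c i * EE k a c l j) (k+2),
    dif_pos (show k+1 < k+3 by omega), dif_pos (show k+2 < k+3 by omega),
    EE_apply k a c ⟨k+1, by omega⟩ j, EE_apply k a c ⟨k+2, by omega⟩ j, EE_apply k a c i j]
  by_cases h1 : (j : ℕ) = k+1
  · rw [if_pos h1, if_pos h1, if_pos h1, wv_k1, wv_k2, mul_one, mul_zero, add_zero]
  · rw [if_neg h1, if_neg h1, if_neg h1]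
    by_cases h2 : (j : ℕ) = k+2
    · rw [if_pos h2, if_pos h2, if_pos h2, uv_k1 ha, uv_k2 hc, mul_zero, mul_one, zero_add]
    · rw [if_neg h2, if_neg h2, if_neg h2, mul_zero, mul_zero, add_zero]

variable {k a c} in
lemma cpn_eq (ha : c ⟨k+1, by omega⟩ = a) : cpn (k+2) c = EE k a c + BB k a := by
  ext i j
  rw [Matrix.add_apply, EE_apply k a c i j]
  by_cases h1 : (j : ℕ) = k+1
  · have hL : cpn (k+2) c i j = if (i:ℕ) = k+2 then 1 else 0 := by
      simp only [cpn, Matrix.of_apply]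
      rw [if_neg (show ¬ (j:ℕ) = k+2 by omega)]
      by_cases hik : (i:ℕ) = k+2
      · rw [if_pos (show (i:ℕ) = (j:ℕ)+1 by omega), if_pos hik]
      · rw [if_neg (show ¬ (i:ℕ) = (j:ℕ)+1 by omega), if_neg hik]
    have hB : BB k a i j = sv k a i := by
      simp only [BB, Matrix.of_apply]; rw [if_pos h1]
    rw [hL, hB, if_pos h1]
    simp only [wv]
    by_cases hik : (i:ℕ) = k+2
    · rw [if_pos hik, if_pos hik, zero_add]
      have : sv k a i = 1 := by simp only [sv]; rw [if_pos hik]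
      rw [this]
    · rw [if_neg hik, if_neg hik, K2.add_self]
  · by_cases h2 : (j : ℕ) = k+2
    · have hL : cpn (k+2) c i j = c i := by
        simp only [cpn, Matrix.of_apply]; rw [if_pos h2]
      have hB : BB k a i j = tv k a i := by
        simp only [BB, Matrix.of_apply]; rw [if_neg h1, if_pos h2]
      rw [hL, hB, if_neg h1, if_pos h2]
      simp only [uv]
      rw [add_assoc, K2.add_self, add_zero]
    · have hL : cpn (k+2) c i j = if (i:ℕ) = (j:ℕ)+1 then 1 else 0 := by
        simp only [cpn, Matrix.of_apply]; rw [if_neg h2]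
      have hB : BB k a i j = if (i:ℕ) = (j:ℕ)+1 then 1 else 0 := by
        simp only [BB, Matrix.of_apply]; rw [if_neg h1, if_neg h2]
      rw [hL, hB, if_neg h1, if_neg h2, zero_add]

lemma BB_chain : ∀ (j : ℕ) (_ : j ≤ k+1),
    (BB k a ^ j) *ᵥ Pi.single (0 : Fin (k+3)) 1 = Pi.single (⟨j, by omega⟩ : Fin (k+3)) 1 := by
  intro j
  induction j with
  | zero =>
    intro _
    rw [pow_zero, Matrix.one_mulVec]
    rfl
  | succ j ih =>
    intro hj
    rw [pow_succ', ← Matrix.mulVec_mulVec, ih (by omega), Matrix.mulVec_single]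
    funext i
    simp only [mul_one, BB, Matrix.of_apply, Fin.val_mk, Pi.smul_apply, Matrix.col_apply, op_smul_eq_mul]
    rw [if_neg (show ¬ j = k+1 by omega), if_neg (show ¬ j = k+2 by omega), Pi.single_apply]
    by_cases h : (i : ℕ) = j + 1
    · rw [if_pos h, if_pos (Fin.ext h)]
    · rw [if_neg h, if_neg (fun hh => h (congrArg Fin.val hh))]

lemma BB_s : BB k a *ᵥ Pi.single (⟨k+1, by omega⟩ : Fin (k+3)) 1 = sv k a := by
  rw [Matrix.mulVec_single]
  funext i
  simp [BB]

lemma BB_nilp : BB k a ^ (k+3) = 0 := by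
  have h2 : (BB k a ^ (k+2)) *ᵥ Pi.single (0 : Fin (k+3)) 1 = sv k a := by
    rw [pow_succ', ← Matrix.mulVec_mulVec, BB_chain k a (k+1) le_rfl, BB_s]
  have h0 : (BB k a ^ (k+3)) *ᵥ Pi.single (0 : Fin (k+3)) 1 = 0 := by
    rw [pow_succ', ← Matrix.mulVec_mulVec, h2, key_Bs]
  have hcols : ∀ j : Fin (k+3), (j : ℕ) ≤ k+1 → (BB k a ^ (k+3)) *ᵥ Pi.single j 1 = 0 := by
    intro j hj
    have hsingle : Pi.single j (1 : K2) = (BB k a ^ (j : ℕ)) *ᵥ Pi.single 0 1 := by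
      rw [BB_chain k a (j : ℕ) hj]
    rw [hsingle, Matrix.mulVec_mulVec, ← pow_add,
      show k+3+(j:ℕ) = (j:ℕ)+(k+3) from Nat.add_comm _ _, pow_add,
      ← Matrix.mulVec_mulVec, h0, Matrix.mulVec_zero]
  have hentries : ∀ (i j : Fin (k+3)), (j : ℕ) ≤ k+1 → (BB k a ^ (k+3)) i j = 0 := by
    intro i j hj
    have h := hcols j hj
    rw [Matrix.mulVec_single] at h
    have := congrFun h i
    simpa using this
  have hlast : ∀ i : Fin (k+3), (BB k a ^ (k+3)) i ⟨k+2, by omega⟩ = 0 := by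
    intro i
    have hBs : (BB k a ^ (k+3)) *ᵥ sv k a = 0 := by
      rw [pow_succ, ← Matrix.mulVec_mulVec, key_Bs, Matrix.mulVec_zero]
    have h := congrFun hBs i
    rw [show ((BB k a ^ (k+3)) *ᵥ sv k a) i = ∑ l, (BB k a ^ (k+3)) i l * sv k a l from rfl,
      Finset.sum_eq_single (⟨k+2, by omega⟩ : Fin (k+3))] at h
    · rw [sv_k2, mul_one] at h
      exact h
    · intro b _ hb
      rw [hentries i b (by
        have hx1 : (b : ℕ) < k+3 := b.isLt
        have hx2 : ¬ (b : ℕ) = k+2 := fun hv => hb (Fin.ext hv)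
        omega), zero_mul]
    · intro habs
      exact absurd (Finset.mem_univ _) habs
  ext i j
  rw [Matrix.zero_apply]
  by_cases hj : (j : ℕ) ≤ k+1
  · exact hentries i j hj
  · have hjval : (j : ℕ) = k+2 := by have := j.isLt; omega
    have hjv : j = ⟨k+2, by omega⟩ := Fin.ext hjval
    rw [hjv]
    exact hlast i

end TraceZero2

lemma nc_cpn_trace_zero_big (k : ℕ) (c : Fin (k+3) → K2) (hc : c ⟨k+2, by omega⟩ = 0) :
    NCe (cpn (k+2) c) :=
  ⟨EE k (c ⟨k+1, by omega⟩) c, BB k (c ⟨k+1, by omega⟩),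
    EE_idem rfl hc, ⟨k+3, BB_nilp k _⟩, cpn_eq rfl⟩

lemma nc_zero {S : Type*} [Ring S] : NCe (0 : S) :=
  ⟨0, 0, by simp [IsIdempotentElem], ⟨1, by simp⟩, by simp⟩

lemma nc_cpn (n : ℕ) (c : Fin (n+1) → K2) : NCe (cpn n c) := by
  have hv : ∀ x : K2, x = 0 ∨ x = 1 := by decide
  rcases hv (c ⟨n, Nat.lt_succ_self n⟩) with h | h
  · -- trace zero
    match n, c, h with
    | 0, c, h =>
      have : cpn 0 c = 0 := by
        ext i j
        have hi : i = ⟨0, by omega⟩ := Fin.ext (by omega)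
        have hj : (j : ℕ) = 0 := by omega
        simp only [cpn, Matrix.of_apply, if_pos hj, hi]
        exact h
      rw [this]
      exact nc_zero
    | 1, c, h =>
      rcases hv (c ⟨0, by omega⟩) with h0 | h0
      · -- the zero matrix case entries (c0 = 0)
        have hm : cpn 1 c = Matrix.of ![![0, 0], ![1, 0]] := by
          ext i j
          fin_cases i <;> fin_cases j <;>
            simp [cpn] <;> first | exact h0 | exact h
        refine ⟨0, cpn 1 c, by simp [IsIdempotentElem], ⟨2, ?_⟩, (zero_add _).symm⟩
        rw [hm]
        decide
      · have hm : cpn 1 c = Matrix.of ![![0, 1], ![1, 0]] := by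
          ext i j
          fin_cases i <;> fin_cases j <;>
            simp [cpn] <;> first | exact h0 | exact h
        refine ⟨1, Matrix.of ![![1, 1], ![1, 1]], by simp [IsIdempotentElem], ⟨2, by decide⟩, ?_⟩
        rw [hm]
        decide
    | (k+2), c, h => exact nc_cpn_trace_zero_big k c h
  · exact nc_cpn_trace_one n c h

lemma nc_of_companion_like {d : ℕ} (hd : 1 ≤ d) (M₁ : Matrix (Fin d) (Fin d) K2)
    (hcol : ∀ i j : Fin d, (j : ℕ) < d - 1 → M₁ i j = if (i : ℕ) = (j : ℕ) + 1 then 1 else 0) :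
    NCe M₁ := by
  obtain ⟨d', rfl⟩ : ∃ d', d = d' + 1 := ⟨d - 1, by omega⟩
  have hM : M₁ = cpn d' (fun i => M₁ i ⟨d', by omega⟩) := by
    ext i j
    simp only [cpn, Matrix.of_apply]
    by_cases hj : (j : ℕ) = d'
    · rw [if_pos hj]
      congr 1
      exact Fin.ext hj
    · rw [if_neg hj, hcol i j (by omega)]
  rw [hM]
  exact nc_cpn d' _

theorem nc_matrix_K2 : ∀ (n : ℕ) (A : Matrix (Fin n) (Fin n) K2), NCe A := by
  intro n
  induction n using Nat.strong_induction_on with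
  | _ n IH =>
  intro A
  rcases Nat.eq_zero_or_pos n with rfl | hn
  · have hA : A = 0 := Subsingleton.elim _ _
    rw [hA]; exact nc_zero
  classical
  set f : (Fin n → K2) →ₗ[K2] (Fin n → K2) := Matrix.toLinAlgEquiv' A with hf_def
  have hf_apply : ∀ x, f x = A *ᵥ x := fun x => Matrix.toLinAlgEquiv'_apply A x
  set v : ℕ → (Fin n → K2) := fun k => (A ^ k) *ᵥ Pi.single (⟨0, hn⟩ : Fin n) 1 with hv_def
  have hone : v 0 ≠ 0 := by
    intro h0
    have := congrFun h0 ⟨0, hn⟩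
    rw [hv_def] at this
    simp [Matrix.one_mulVec] at this
  have hfv : ∀ k : ℕ, f (v k) = v (k + 1) := by
    intro k
    rw [hf_apply, hv_def]
    simp only []
    rw [Matrix.mulVec_mulVec, ← pow_succ']
  have hnotli : ¬ LinearIndependent K2 (fun j : Fin (n+1) => v (j : ℕ)) := by
    intro hli
    have hcard := hli.fintype_card_le_finrank
    rw [Module.finrank_pi, Fintype.card_fin, Fintype.card_fin] at hcard
    omega
  have hliFamily : ∀ m : ℕ,
      (∀ k < m, v k ∉ Submodule.span K2 (Set.range fun j : Fin k => v (j : ℕ))) →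
      LinearIndependent K2 (fun j : Fin m => v (j : ℕ)) := by
    intro m
    induction m with
    | zero => exact fun _ => linearIndependent_empty_type
    | succ m ih =>
      intro hm
      have h1 := ih (fun k hk => hm k (by omega))
      have h2 := hm m (by omega)
      have hsnoc : (fun j : Fin (m+1) => v (j : ℕ)) = Fin.snoc (fun j : Fin m => v (j : ℕ)) (v m) := by
        funext j
        induction j using Fin.lastCases with
        | last => rw [Fin.snoc_last, Fin.val_last]
        | cast i => rw [Fin.snoc_castSucc, Fin.coe_castSucc]
      rw [hsnoc, linearIndependent_fin_snoc]
      exact ⟨h1, h2⟩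
  have hex : ∃ m : ℕ, v m ∈ Submodule.span K2 (Set.range fun j : Fin m => v (j : ℕ)) := by
    by_contra hc
    push_neg at hc
    exact hnotli (hliFamily (n+1) fun k _ => hc k)
  set d := Nat.find hex with hd_def
  have hd : v d ∈ Submodule.span K2 (Set.range fun j : Fin d => v (j : ℕ)) := Nat.find_spec hex
  have hdmin : ∀ k, k < d → v k ∉ Submodule.span K2 (Set.range fun j : Fin k => v (j : ℕ)) :=
    fun k hk => Nat.find_min hex hk
  have hli : LinearIndependent K2 (fun j : Fin d => v (j : ℕ)) := hliFamily d hdmin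
  have hd1 : 1 ≤ d := by
    by_contra h0
    have hd0 : d = 0 := by omega
    rw [hd0] at hd
    rw [Set.range_eq_empty, Submodule.span_empty] at hd
    exact hone (Submodule.mem_bot K2 |>.mp hd)
  have hdn : d ≤ n := by
    by_contra hcd
    push_neg at hcd
    exact hnotli (hliFamily (n+1) fun k hk => hdmin k (by omega))
  set W := Submodule.span K2 (Set.range fun j : Fin d => v (j : ℕ)) with hW_def
  obtain ⟨U, hcompl⟩ := Submodule.exists_isCompl W
  set bW : Module.Basis (Fin d) K2 W := Module.Basis.span hli with hbW_def
  set e' := Module.finrank K2 U with he'_def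
  set bU : Module.Basis (Fin e') K2 U := Module.finBasis K2 U with hbU_def
  have he' : d + e' = n := by
    have hsum := Submodule.finrank_add_eq_of_isCompl hcompl
    have h1 : Module.finrank K2 W = d := by
      rw [Module.finrank_eq_card_basis bW, Fintype.card_fin]
    have h2 : Module.finrank K2 (Fin n → K2) = n := by
      rw [Module.finrank_pi, Fintype.card_fin]
    omega
  have he'n : e' < n := by omega
  set equivWU := Submodule.prodEquivOfIsCompl W U hcompl with hequiv_def
  set b : Module.Basis (Fin d ⊕ Fin e') K2 (Fin n → K2) := (bW.prod bU).map equivWU with hb_def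
  have hbWv : ∀ j : Fin d, b (Sum.inl j) = v (j : ℕ) := by
    intro j
    rw [hb_def, Module.Basis.map_apply]
    have : (bW.prod bU) (Sum.inl j) = (bW j, 0) := by
      ext
      · rw [Module.Basis.prod_apply_inl_fst]
      · rw [Module.Basis.prod_apply_inl_snd]
    rw [this, Submodule.coe_prodEquivOfIsCompl']
    simp only [Submodule.coe_zero, add_zero]
    rw [hbW_def, Module.Basis.span_apply]
  have hvW : ∀ k : ℕ, k ≤ d → v k ∈ W := by
    intro k hk
    rcases eq_or_lt_of_le hk with rfl | hk'
    · exact hd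
    · exact Submodule.subset_span ⟨⟨k, hk'⟩, rfl⟩
  have hreprW : ∀ x : Fin n → K2, x ∈ W → ∀ i : Fin e', b.repr x (Sum.inr i) = 0 := by
    intro x hx i
    rw [hb_def, Module.Basis.map_repr]
    have hsymm : equivWU.symm x = ((⟨x, hx⟩ : W), (0 : U)) := by
      rw [LinearEquiv.symm_apply_eq, hequiv_def, Submodule.coe_prodEquivOfIsCompl']
      simp
    simp only [LinearEquiv.trans_apply]
    rw [hsymm, Module.Basis.prod_repr_inr]
    simp
  set M := LinearMap.toMatrixAlgEquiv b f with hM_def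
  have hMapply : ∀ p q, M p q = b.repr (f (b q)) p :=
    fun p q => LinearMap.toMatrixAlgEquiv_apply b f p q
  have hblock : M.toBlocks₂₁ = 0 := by
    ext i j
    show M (Sum.inr i) (Sum.inl j) = 0
    rw [hMapply]
    apply hreprW
    rw [hbWv j, hfv]
    exact hvW _ (by omega)
  have hNC11 : NCe M.toBlocks₁₁ := by
    apply nc_of_companion_like hd1
    intro i j hj
    show M (Sum.inl i) (Sum.inl j) = _
    rw [hMapply, hbWv j, hfv]
    have hvb : v ((j : ℕ) + 1) = b (Sum.inl ⟨(j : ℕ) + 1, by omega⟩) := by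
      rw [hbWv]
    rw [hvb, Module.Basis.repr_self, Finsupp.single_apply]
    by_cases h : (i : ℕ) = (j : ℕ) + 1
    · rw [if_pos h, if_pos (by exact congrArg Sum.inl (Fin.ext h.symm))]
    · rw [if_neg h, if_neg (by
        intro hh
        apply h
        have := Sum.inl.inj hh
        exact (congrArg Fin.val this).symm)]
  have hNC22 : NCe M.toBlocks₂₂ := IH e' he'n _
  have hMblocks : M = Matrix.fromBlocks M.toBlocks₁₁ M.toBlocks₁₂ 0 M.toBlocks₂₂ := by
    rw [← hblock]
    exact (Matrix.fromBlocks_toBlocks M).symm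
  have hMNC : NCe M := by
    rw [hMblocks]
    exact NCe.fromBlocks _ hNC11 hNC22
  have hfNC : NCe f := by
    have := hMNC.map (LinearMap.toMatrixAlgEquiv b).symm.toRingEquiv
    rwa [show (LinearMap.toMatrixAlgEquiv b).symm.toRingEquiv M = f by
      rw [hM_def]; exact AlgEquiv.symm_apply_apply _ _] at this
  have := hfNC.map (Matrix.toLinAlgEquiv' (R := K2) (n := Fin n)).symm.toRingEquiv
  rwa [show (Matrix.toLinAlgEquiv' (R := K2) (n := Fin n)).symm.toRingEquiv f = A by
    rw [hf_def]; exact AlgEquiv.symm_apply_apply _ _] at this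


/-- A matrix over a commutative ring all of whose entries are nilpotent is nilpotent. -/
lemma matrix_nilpotent_of_entries {R : Type*} [CommRing R] {n : ℕ}
    (A : Matrix (Fin n) (Fin n) R) (hA : ∀ i j, IsNilpotent (A i j)) : IsNilpotent A := by
  set I : Ideal R := Ideal.span (Set.range fun p : Fin n × Fin n => A p.1 p.2) with hI_def
  have hfg : I.FG := Submodule.fg_span (Set.finite_range _)
  have hle : I ≤ (0 : Ideal R).radical := by
    rw [hI_def, Ideal.span_le]
    rintro x ⟨p, rfl⟩
    exact mem_nilradical.mpr (hA p.1 p.2)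
  obtain ⟨t, ht⟩ := Ideal.exists_pow_le_of_le_radical_of_fg hle hfg
  have hmem : ∀ (p : ℕ) (i j : Fin n), (A ^ p) i j ∈ I ^ p := by
    intro p
    induction p with
    | zero => intro i j; simp [Ideal.one_eq_top]
    | succ p ih =>
      intro i j
      rw [show A ^ (p+1) = A ^ p * A from pow_succ A p, Matrix.mul_apply]
      apply Ideal.sum_mem
      intro l _
      rw [pow_succ]
      exact Ideal.mul_mem_mul (ih i l) (Ideal.subset_span ⟨(l, j), rfl⟩)
  refine ⟨t, ?_⟩
  ext i j
  rw [Matrix.zero_apply]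
  have := ht (hmem t i j)
  simpa using this

lemma idem_eq_zero_or_one_of_local {R : Type*} [CommRing R] [IsLocalRing R] {e : R}
    (he : IsIdempotentElem e) : e = 0 ∨ e = 1 := by
  rcases IsLocalRing.isUnit_or_isUnit_of_add_one (show e + (1 - e) = 1 by ring) with hu | hu
  · right
    have hz : e * (1 - e) = 0 := by
      rw [mul_sub, mul_one, he.eq, sub_self]
    have h1e : 1 - e = 0 := by
      rcases hu with ⟨u, rfl⟩
      calc (1 : R) - (u : R) = ((u⁻¹ : Rˣ) : R) * ((u : R) * (1 - (u : R))) := by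
            rw [← mul_assoc]; simp
      _ = 0 := by rw [hz, mul_zero]
    linear_combination -h1e
  · left
    have hz : (1 - e) * e = 0 := by
      rw [sub_mul, one_mul, he.eq, sub_self]
    rcases hu with ⟨u, hu⟩
    calc e = ((u⁻¹ : Rˣ) : R) * ((1 - e) * e) := by rw [← hu, ← mul_assoc]; simp
    _ = 0 := by rw [hz, mul_zero]

theorem matrix_nilClean_of_comm_local_nilClean (R : Type*) [CommRing R] [IsLocalRing R]
    (h : IsNilCleanRing R) (n : ℕ) (hn : 0 < n) :
    IsNilCleanRing (Matrix (Fin n) (Fin n) R) := by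
  classical
  intro A
  set k := IsLocalRing.ResidueField R with hk_def
  -- every element of the residue field is 0 or 1
  have hk01 : ∀ x : k, x = 0 ∨ x = 1 := by
    intro x
    obtain ⟨r, rfl⟩ := IsLocalRing.residue_surjective (R := R) x
    obtain ⟨e, ν, he, hν, rfl⟩ := h r
    have hνres : IsLocalRing.residue R ν = 0 := by
      have hnil : IsNilpotent (IsLocalRing.residue R ν) := hν.map _
      exact hnil.eq_zero
    rw [map_add, hνres, add_zero]
    rcases idem_eq_zero_or_one_of_local he with rfl | rfl
    · left; exact map_zero _
    · right; exact map_one _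
  -- maximal ideal is nil
  have hmax_nil : ∀ x ∈ IsLocalRing.maximalIdeal R, IsNilpotent x := by
    intro x hx
    obtain ⟨e, ν, he, hν, rfl⟩ := h x
    rcases idem_eq_zero_or_one_of_local he with rfl | rfl
    · simpa using hν
    · exact absurd hν.isUnit_one_add ((IsLocalRing.mem_maximalIdeal _).mp hx)
  -- char 2 and equivalence with ZMod 2
  have h2 : (2 : k) = 0 := by
    rcases hk01 2 with h' | h'
    · exact h'
    · exact absurd (by linear_combination h' : (1 : k) = 0) one_ne_zero
  haveI : CharP k 2 := by
    constructor
    intro x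
    have hmod : (x : k) = ((x % 2 : ℕ) : k) := by
      conv_lhs => rw [← Nat.mod_add_div x 2]
      push_cast
      rw [Nat.cast_mul, Nat.cast_ofNat, h2]
      ring
    rcases Nat.mod_two_eq_zero_or_one x with hx | hx
    · rw [hmod, hx]
      simpa using Nat.dvd_of_mod_eq_zero hx
    · rw [hmod, hx]
      simp only [Nat.cast_one]
      exact iff_of_false one_ne_zero (by omega)
  haveI : Fact (Nat.Prime 2) := ⟨Nat.prime_two⟩
  set ψ₀ : ZMod 2 →+* k := ZMod.castHom dvd_rfl k with hψ₀
  have hψbij : Function.Bijective ψ₀ :=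
    ⟨ψ₀.injective, fun x => by
      rcases hk01 x with rfl | rfl
      · exact ⟨0, map_zero _⟩
      · exact ⟨1, map_one _⟩⟩
  set ψ : K2 ≃+* k := RingEquiv.ofBijective ψ₀ hψbij with hψ_def
  -- matrices over the residue field are nil-clean
  have hkmat : ∀ B : Matrix (Fin n) (Fin n) k, NCe B := by
    intro B
    have := (nc_matrix_K2 n ((ψ.mapMatrix (m := Fin n)).symm B)).map (ψ.mapMatrix (m := Fin n))
    rwa [RingEquiv.apply_symm_apply] at this
  -- the quotient map on matrices
  set F : Matrix (Fin n) (Fin n) R →+* Matrix (Fin n) (Fin n) k :=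
    (IsLocalRing.residue R).mapMatrix with hF
  have hker : ∀ X ∈ RingHom.ker F, IsNilpotent X := by
    intro X hX
    apply matrix_nilpotent_of_entries
    intro i j
    apply hmax_nil
    have hX0 : F X = 0 := hX
    have hentry : IsLocalRing.residue R (X i j) = 0 := by
      have h1 : (F X) i j = 0 := by rw [hX0]; rfl
      rwa [hF, RingHom.mapMatrix_apply, Matrix.map_apply] at h1
    rw [← IsLocalRing.ker_residue (R := R)]
    exact RingHom.mem_ker.mpr hentry
  -- decompose the image of A
  obtain ⟨Eb, Nb, hEb, hNb, hsum⟩ := hkmat (F A)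
  have hEbrange : Eb ∈ F.range := by
    refine ⟨Matrix.of fun i j => Function.surjInv (IsLocalRing.residue_surjective (R := R)) (Eb i j), ?_⟩
    ext i j
    rw [hF, RingHom.mapMatrix_apply, Matrix.map_apply]
    exact Function.surjInv_eq _ _
  obtain ⟨E, hE, hFE⟩ := exists_isIdempotentElem_eq_of_ker_isNilpotent F hker Eb hEbrange hEb
  refine ⟨E, A - E, hE, ?_, by abel⟩
  obtain ⟨s, hs⟩ := hNb
  have hFs : F ((A - E) ^ s) = 0 := by
    rw [map_pow, map_sub, hFE, show F A - Eb = Nb by rw [hsum]; abel, hs]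
  obtain ⟨t, ht⟩ := hker _ (RingHom.mem_ker.mpr hFs)
  exact ⟨s * t, by rw [pow_mul]; exact ht⟩
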